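/- The optimal value of the constructed two-stage representative selection instance with discrete budgeted uncertainty, min_{x∈X'} ( Σ_{i=1}^{2n} C_i x_i + max_{c∈U^D} min_{y∈Y(x)} Σ_{i=1}^{2n} c_i y_i ), is at most M + 3Q if and only if there exists a set I ⊆ [n] with Σ_{i∈I} a_i = Q. -/
import Mathlib


open Classical
noncomputable section

namespace Partition2RSD

/-- `Q = (1/2) ∑_{i=1}^n a_i`. -/
def Q (n : ℕ) (a : ℕ → ℕ) : ℝ := (∑ i ∈ Finset.Icc 1 n, (a i : ℝ)) / 2

/-- First-stage costs of the constructed instance (items indexed by `1, …, 2n`;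
items `1, …, n` form bucket `T_1`, and item `n + j - 1` forms the singleton bucket `T_j`
for `j ∈ {2, …, n+1}`). -/
def C (n : ℕ) (a : ℕ → ℕ) (W : ℝ) (i : ℕ) : ℝ := if i ≤ n then W else (a (i - n) : ℝ)

/-- Lower second-stage costs `c̲` of the constructed instance. -/
def cl (n : ℕ) (M : ℝ) (i : ℕ) : ℝ := if i ≤ n then M else 0

/-- Deviations `d` of the constructed instance (so `c̄_i = c̲_i + d_i`). -/
def d (n : ℕ) (a : ℕ → ℕ) (i : ℕ) : ℝ :=
  if i ≤ n then 2 * Q n a else 2 * (a (i - n) : ℝ)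

/-- The set `X'` of feasible first-stage decisions: `x` binary with at most one item chosen
from each bucket. -/
def FeasX (n : ℕ) (x : ℕ → ℝ) : Prop :=
  (∀ i ∈ Finset.Icc 1 (2 * n), x i = 0 ∨ x i = 1) ∧
  (∑ i ∈ Finset.Icc 1 n, x i ≤ 1) ∧
  ∀ i ∈ Finset.Icc (n + 1) (2 * n), x i ≤ 1

/-- The set `Y(x)` of feasible second-stage decisions: `y` binary, exactly one item chosen
from each bucket in total, no item chosen twice. -/
def FeasY (n : ℕ) (x y : ℕ → ℝ) : Prop :=
  (∀ i ∈ Finset.Icc 1 (2 * n), y i = 0 ∨ y i = 1) ∧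
  (∑ i ∈ Finset.Icc 1 n, (x i + y i) = 1) ∧
  (∀ i ∈ Finset.Icc (n + 1) (2 * n), x i + y i = 1) ∧
  ∀ i ∈ Finset.Icc 1 (2 * n), x i + y i ≤ 1

/-- The discrete budgeted uncertainty set `U^D` with budget `Γ = n`. -/
def UD (n : ℕ) (a : ℕ → ℕ) (M : ℝ) : Set (ℕ → ℝ) :=
  {c | ∃ δ : ℕ → ℝ, (∀ i ∈ Finset.Icc 1 (2 * n), δ i = 0 ∨ δ i = 1) ∧
    (∀ i ∈ Finset.Icc 1 (2 * n), c i = cl n M i + d n a i * δ i) ∧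
    (∀ i ∈ Finset.Icc 1 (2 * n), 0 ≤ c i) ∧
    ∑ i ∈ Finset.Icc 1 (2 * n), δ i ≤ (n : ℝ)}

/-- The optimal value of the constructed two-stage representative selection instance with
discrete budgeted uncertainty. -/
def OptVal (n : ℕ) (a : ℕ → ℕ) (M W : ℝ) : ℝ :=
  sInf {val | ∃ x, FeasX n x ∧
    val = (∑ i ∈ Finset.Icc 1 (2 * n), C n a W i * x i) +
      sSup {w | ∃ c ∈ UD n a M,
        w = sInf {z | ∃ y, FeasY n x y ∧
          z = ∑ i ∈ Finset.Icc 1 (2 * n), c i * y i}}}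

/-- The optimal value of the constructed (2RS-D) instance is at most `M + 3Q` if and only if
the partition instance is a yes-instance. -/
-- ===== auxiliary definitions =====

def Zset (n : ℕ) (x c : ℕ → ℝ) : Set ℝ :=
  {z | ∃ y, FeasY n x y ∧ z = ∑ i ∈ Finset.Icc 1 (2 * n), c i * y i}

def Wset (n : ℕ) (a : ℕ → ℕ) (M : ℝ) (x : ℕ → ℝ) : Set ℝ :=
  {w | ∃ c ∈ UD n a M, w = sInf (Zset n x c)}

def Vset (n : ℕ) (a : ℕ → ℕ) (M W : ℝ) : Set ℝ :=
  {val | ∃ x, FeasX n x ∧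
    val = (∑ i ∈ Finset.Icc 1 (2 * n), C n a W i * x i) + sSup (Wset n a M x)}

lemma OptVal_eq (n : ℕ) (a : ℕ → ℕ) (M W : ℝ) : OptVal n a M W = sInf (Vset n a M W) := rfl

lemma Q_nonneg (n : ℕ) (a : ℕ → ℕ) : 0 ≤ Q n a := by
  unfold Q
  have : (0:ℝ) ≤ ∑ i ∈ Finset.Icc 1 n, (a i : ℝ) :=
    Finset.sum_nonneg fun i _ => Nat.cast_nonneg _
  linarith

lemma two_Q (n : ℕ) (a : ℕ → ℕ) : ∑ i ∈ Finset.Icc 1 n, (a i : ℝ) = 2 * Q n a := by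
  unfold Q; ring

lemma mem2n_of_le {n i : ℕ} (hi : i ∈ Finset.Icc 1 n) : i ∈ Finset.Icc 1 (2 * n) := by
  simp only [Finset.mem_Icc] at *; omega

lemma memn_add {n j : ℕ} (hj : j ∈ Finset.Icc 1 n) : n + j ∈ Finset.Icc 1 (2 * n) := by
  simp only [Finset.mem_Icc] at *; omega

lemma sum_split (n : ℕ) (f : ℕ → ℝ) :
    ∑ i ∈ Finset.Icc 1 (2 * n), f i
      = ∑ i ∈ Finset.Icc 1 n, f i + ∑ j ∈ Finset.Icc 1 n, f (n + j) := by
  have hset : Finset.Icc 1 (2 * n) = Finset.Icc 1 n ∪ Finset.Icc (n + 1) (2 * n) := by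
    ext i; simp only [Finset.mem_Icc, Finset.mem_union]; omega
  have hdisj : Disjoint (Finset.Icc 1 n) (Finset.Icc (n + 1) (2 * n)) := by
    rw [Finset.disjoint_left]
    intro i hi hi2
    simp only [Finset.mem_Icc] at hi hi2
    omega
  rw [hset, Finset.sum_union hdisj]
  congr 1
  have hmap : Finset.Icc (n + 1) (2 * n)
      = Finset.map ⟨fun j => n + j, add_right_injective n⟩ (Finset.Icc 1 n) := by
    ext i
    simp only [Finset.mem_map, Finset.mem_Icc, Function.Embedding.coeFn_mk]
    constructor
    · rintro ⟨h1, h2⟩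
      exact ⟨i - n, ⟨by omega, by omega⟩, by omega⟩
    · rintro ⟨j, hj, rfl⟩
      omega
  rw [hmap, Finset.sum_map]
  rfl

def yfun (n : ℕ) (x : ℕ → ℝ) (i0 : ℕ) : ℕ → ℝ :=
  fun i => if i = i0 then 1 else if i ≤ n then 0 else 1 - x i

lemma yfun_feas {n : ℕ} {x : ℕ → ℝ} (hx : FeasX n x)
    (hx0 : ∀ i ∈ Finset.Icc 1 n, x i = 0) {i0 : ℕ} (hi0 : i0 ∈ Finset.Icc 1 n) :
    FeasY n x (yfun n x i0) := by
  obtain ⟨hxb, -, -⟩ := hx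
  have hi0' := hi0
  have hx00 : x i0 = 0 := hx0 i0 hi0
  simp only [Finset.mem_Icc] at hi0'
  refine ⟨?_, ?_, ?_, ?_⟩
  · intro i hi
    have hb := hxb i hi
    unfold yfun
    by_cases h1 : i = i0
    · right; simp [h1]
    · by_cases h2 : i ≤ n
      · left; simp [h1, h2]
      · rcases hb with h | h
        · right; simp [h1, h2, h]
        · left; simp [h1, h2, h]
  · have hcong : ∀ i ∈ Finset.Icc 1 n, x i + yfun n x i0 i = if i = i0 then 1 else 0 := by
      intro i hi
      have hx0i := hx0 i hi
      simp only [Finset.mem_Icc] at hi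
      unfold yfun
      by_cases h1 : i = i0
      · simp [h1, hx00]
      · simp [h1, hi.2, hx0i]
    rw [Finset.sum_congr rfl hcong, Finset.sum_ite_eq' (Finset.Icc 1 n) i0 (fun _ => (1:ℝ))]
    simp [hi0]
  · intro i hi
    simp only [Finset.mem_Icc] at hi
    have h1 : i ≠ i0 := by omega
    have h2 : ¬ i ≤ n := by omega
    unfold yfun; simp [h1, h2]
  · intro i hi
    have hb := hxb i hi
    simp only [Finset.mem_Icc] at hi
    unfold yfun
    by_cases h2 : i ≤ n
    · have h1 : x i = 0 := hx0 i (by simp only [Finset.mem_Icc]; omega)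
      by_cases h3 : i = i0 <;> simp [h1, h3, h2, hx00]
    · have h1 : i ≠ i0 := by omega
      simp [h1, h2]

lemma yfun_cost {n : ℕ} (x c : ℕ → ℝ) {i0 : ℕ} (hi0 : i0 ∈ Finset.Icc 1 n) :
    ∑ i ∈ Finset.Icc 1 (2 * n), c i * yfun n x i0 i
      = c i0 + ∑ j ∈ Finset.Icc 1 n, c (n + j) * (1 - x (n + j)) := by
  have hi0' := hi0
  simp only [Finset.mem_Icc] at hi0'
  rw [sum_split]
  congr 1
  · have h1 : ∀ i ∈ Finset.Icc 1 n, c i * yfun n x i0 i = if i = i0 then c i else 0 := by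
      intro i hi
      simp only [Finset.mem_Icc] at hi
      unfold yfun
      by_cases h : i = i0 <;> simp [h, hi.2]
    rw [Finset.sum_congr rfl h1, Finset.sum_ite_eq' (Finset.Icc 1 n) i0 c]
    simp [hi0]
  · apply Finset.sum_congr rfl
    intro j hj
    simp only [Finset.mem_Icc] at hj
    have h1 : n + j ≠ i0 := by omega
    have h2 : ¬ n + j ≤ n := by omega
    unfold yfun; simp [h1, h2]

lemma Zset_nonneg {n : ℕ} {a : ℕ → ℕ} {M : ℝ} {x c : ℕ → ℝ} (hc : c ∈ UD n a M) :
    ∀ z ∈ Zset n x c, 0 ≤ z := by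
  obtain ⟨δ, hδb, hceq, hc0, hsum⟩ := hc
  rintro z ⟨y, hy, rfl⟩
  apply Finset.sum_nonneg
  intro i hi
  have hyb := hy.1 i hi
  have hci := hc0 i hi
  rcases hyb with h | h
  · simp [h]
  · simpa [h] using hci

lemma Wset_nonneg {n : ℕ} {a : ℕ → ℕ} {M : ℝ} {x : ℕ → ℝ} :
    ∀ w ∈ Wset n a M x, 0 ≤ w := by
  rintro w ⟨c, hc, rfl⟩
  exact Real.sInf_nonneg (Zset_nonneg hc)

lemma C_nonneg {n : ℕ} {a : ℕ → ℕ} {W : ℝ} (hW0 : 0 ≤ W) (i : ℕ) : 0 ≤ C n a W i := by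
  unfold C
  split
  · exact hW0
  · exact Nat.cast_nonneg _

lemma Vset_nonneg {n : ℕ} {a : ℕ → ℕ} {M W : ℝ} (hW0 : 0 ≤ W) :
    ∀ v ∈ Vset n a M W, 0 ≤ v := by
  rintro v ⟨x, hx, rfl⟩
  have h1 : 0 ≤ ∑ i ∈ Finset.Icc 1 (2 * n), C n a W i * x i := by
    apply Finset.sum_nonneg
    intro i hi
    rcases hx.1 i hi with h | h
    · simp [h]
    · simpa [h] using C_nonneg (a := a) (n := n) hW0 i
  have h2 : 0 ≤ sSup (Wset n a M x) := Real.sSup_nonneg Wset_nonneg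
  linarith

lemma UD_bounds {n : ℕ} {a : ℕ → ℕ} {M : ℝ} (hQ0 : 0 ≤ Q n a) {c : ℕ → ℝ}
    (hc : c ∈ UD n a M) :
    (∀ i ∈ Finset.Icc 1 n, c i ≤ M + 2 * Q n a) ∧
      ∀ j ∈ Finset.Icc 1 n, c (n + j) ≤ 2 * (a j : ℝ) := by
  obtain ⟨δ, hδb, hceq, hc0, -⟩ := hc
  constructor
  · intro i hi
    have h2 := hceq i (mem2n_of_le hi)
    have h3 := hδb i (mem2n_of_le hi)
    simp only [Finset.mem_Icc] at hi
    rw [h2]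
    unfold cl d
    rw [if_pos hi.2, if_pos hi.2]
    rcases h3 with h | h <;> rw [h] <;> linarith
  · intro j hj
    have h2 := hceq (n + j) (memn_add hj)
    have h3 := hδb (n + j) (memn_add hj)
    simp only [Finset.mem_Icc] at hj
    have hle : ¬ n + j ≤ n := by omega
    have hsub : n + j - n = j := by omega
    rw [h2]
    unfold cl d
    rw [if_neg hle, if_neg hle, hsub]
    have ha0 : (0:ℝ) ≤ (a j : ℝ) := Nat.cast_nonneg _
    rcases h3 with h | h <;> rw [h] <;> linarith

lemma first_stage_cost {n : ℕ} (a : ℕ → ℕ) (W : ℝ) {x : ℕ → ℝ}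
    (hx0 : ∀ i ∈ Finset.Icc 1 n, x i = 0)
    (hxb : ∀ i ∈ Finset.Icc 1 (2 * n), x i = 0 ∨ x i = 1) :
    ∑ i ∈ Finset.Icc 1 (2 * n), C n a W i * x i
      = ∑ j ∈ Finset.Icc 1 n, (if x (n + j) = 1 then (a j : ℝ) else 0) := by
  rw [sum_split]
  have h1 : ∑ i ∈ Finset.Icc 1 n, C n a W i * x i = 0 :=
    Finset.sum_eq_zero fun i hi => by rw [hx0 i hi, mul_zero]
  rw [h1, zero_add]
  apply Finset.sum_congr rfl
  intro j hj
  simp only [Finset.mem_Icc] at hj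
  have h2 : ¬ n + j ≤ n := by omega
  have h3 : n + j - n = j := by omega
  unfold C
  rw [if_neg h2, h3]
  by_cases h : x (n + j) = 1
  · simp [h]
  · have hz : x (n + j) = 0 := by
      rcases hxb (n + j) (by simp only [Finset.mem_Icc]; omega) with h' | h'
      · exact h'
      · exact absurd h' h
    simp [h, hz]

lemma inner_crude {n : ℕ} (hn : 1 ≤ n) {a : ℕ → ℕ} {M : ℝ} {x : ℕ → ℝ}
    (hQ0 : 0 ≤ Q n a) (hx : FeasX n x) (hx0 : ∀ i ∈ Finset.Icc 1 n, x i = 0)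
    {c : ℕ → ℝ} (hc : c ∈ UD n a M) :
    sInf (Zset n x c) ≤ M + 2 * Q n a + ∑ j ∈ Finset.Icc 1 n, 2 * (a j : ℝ) := by
  have h1 : (1:ℕ) ∈ Finset.Icc 1 n := by simp only [Finset.mem_Icc]; omega
  have hbdd : BddBelow (Zset n x c) := ⟨0, fun z hz => Zset_nonneg hc z hz⟩
  have hmem : (∑ i ∈ Finset.Icc 1 (2 * n), c i * yfun n x 1 i) ∈ Zset n x c :=
    ⟨yfun n x 1, yfun_feas hx hx0 h1, rfl⟩
  refine le_trans (csInf_le hbdd hmem) ?_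
  rw [yfun_cost x c h1]
  have hub := UD_bounds hQ0 hc
  have hterm : ∀ j ∈ Finset.Icc 1 n, c (n + j) * (1 - x (n + j)) ≤ 2 * (a j : ℝ) := by
    intro j hj
    obtain ⟨δ, hδb, hceq, hc0, -⟩ := hc
    have hcnn : 0 ≤ c (n + j) := hc0 (n + j) (memn_add hj)
    have hcle : c (n + j) ≤ 2 * (a j : ℝ) := hub.2 j hj
    have hxb : x (n + j) = 0 ∨ x (n + j) = 1 := hx.1 (n + j) (memn_add hj)
    rcases hxb with h | h <;> rw [h] <;> nlinarith
  have := Finset.sum_le_sum hterm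
  have hc1 : c 1 ≤ M + 2 * Q n a := hub.1 1 h1
  linarith

lemma Wset_bddAbove {n : ℕ} (hn : 1 ≤ n) {a : ℕ → ℕ} {M : ℝ} {x : ℕ → ℝ}
    (hQ0 : 0 ≤ Q n a) (hx : FeasX n x) (hx0 : ∀ i ∈ Finset.Icc 1 n, x i = 0) :
    BddAbove (Wset n a M x) := by
  refine ⟨M + 2 * Q n a + ∑ j ∈ Finset.Icc 1 n, 2 * (a j : ℝ), ?_⟩
  rintro w ⟨c, hc, rfl⟩
  exact inner_crude hn hQ0 hx hx0 hc

lemma inner_le_of_small {n : ℕ} (hn : 1 ≤ n) {a : ℕ → ℕ} {M : ℝ} {x : ℕ → ℝ}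
    (hQ0 : 0 ≤ Q n a) (hx : FeasX n x) (hx0 : ∀ i ∈ Finset.Icc 1 n, x i = 0)
    (hS : ∑ j ∈ Finset.Icc 1 n, (if x (n + j) = 1 then 0 else 2 * (a j : ℝ)) ≤ 2 * Q n a)
    {c : ℕ → ℝ} (hc : c ∈ UD n a M) :
    sInf (Zset n x c) ≤ M + 2 * Q n a := by
  have h1mem : (1:ℕ) ∈ Finset.Icc 1 n := by simp only [Finset.mem_Icc]; omega
  have hbdd : BddBelow (Zset n x c) := ⟨0, fun z hz => Zset_nonneg hc z hz⟩
  have hub := UD_bounds hQ0 hc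
  obtain ⟨δ, hδb, hceq, hc0, hsum⟩ := hc
  by_cases hall : ∀ i ∈ Finset.Icc 1 n, δ i = 1
  · -- all first-bucket deviations used, so singleton deviations are zero
    have hA : ∑ i ∈ Finset.Icc 1 n, δ i = (n : ℝ) := by
      rw [Finset.sum_congr rfl hall]
      simp [Nat.card_Icc]
    have hnn : ∀ j ∈ Finset.Icc 1 n, 0 ≤ δ (n + j) := by
      intro j hj
      rcases hδb (n + j) (memn_add hj) with h | h <;> rw [h] <;> norm_num
    have hjz : ∀ j ∈ Finset.Icc 1 n, δ (n + j) = 0 := by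
      have hsplit := sum_split n δ
      rw [hsplit, hA] at hsum
      have hle0 : ∑ j ∈ Finset.Icc 1 n, δ (n + j) ≤ 0 := by linarith
      exact (Finset.sum_eq_zero_iff_of_nonneg hnn).mp
        (le_antisymm hle0 (Finset.sum_nonneg hnn))
    have hmem : (∑ i ∈ Finset.Icc 1 (2 * n), c i * yfun n x 1 i) ∈ Zset n x c :=
      ⟨yfun n x 1, yfun_feas hx hx0 h1mem, rfl⟩
    refine le_trans (csInf_le hbdd hmem) ?_
    rw [yfun_cost x c h1mem]
    have hc1 : c 1 = M + 2 * Q n a := by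
      rw [hceq 1 (mem2n_of_le h1mem)]
      unfold cl d
      rw [if_pos hn, if_pos hn, hall 1 h1mem, mul_one]
    have hrest : ∀ j ∈ Finset.Icc 1 n, c (n + j) * (1 - x (n + j)) = 0 := by
      intro j hj
      have h2 : ¬ n + j ≤ n := by simp only [Finset.mem_Icc] at hj; omega
      rw [hceq (n + j) (memn_add hj)]
      unfold cl d
      rw [if_neg h2, if_neg h2, hjz j hj]
      ring
    rw [Finset.sum_congr rfl hrest]
    simp [hc1]
  · push_neg at hall
    obtain ⟨i0, hi0mem, hi0ne⟩ := hall
    have hi0z : δ i0 = 0 := by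
      rcases hδb i0 (mem2n_of_le hi0mem) with h | h
      · exact h
      · exact absurd h hi0ne
    have hmem : (∑ i ∈ Finset.Icc 1 (2 * n), c i * yfun n x i0 i) ∈ Zset n x c :=
      ⟨yfun n x i0, yfun_feas hx hx0 hi0mem, rfl⟩
    refine le_trans (csInf_le hbdd hmem) ?_
    rw [yfun_cost x c hi0mem]
    have hci0 : c i0 = M := by
      have hle : i0 ≤ n := by simp only [Finset.mem_Icc] at hi0mem; omega
      rw [hceq i0 (mem2n_of_le hi0mem)]
      unfold cl d
      rw [if_pos hle, if_pos hle, hi0z, mul_zero, add_zero]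
    have hterm : ∀ j ∈ Finset.Icc 1 n,
        c (n + j) * (1 - x (n + j)) ≤ (if x (n + j) = 1 then 0 else 2 * (a j : ℝ)) := by
      intro j hj
      have hcnn : 0 ≤ c (n + j) := hc0 (n + j) (memn_add hj)
      have hcle : c (n + j) ≤ 2 * (a j : ℝ) := hub.2 j hj
      have hxb : x (n + j) = 0 ∨ x (n + j) = 1 := hx.1 (n + j) (memn_add hj)
      by_cases h : x (n + j) = 1
      · rw [if_pos h, h]
        simp
      · have hz : x (n + j) = 0 := by tauto
        rw [if_neg h, hz]
        simpa using hcle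
    have hsum2 := Finset.sum_le_sum hterm
    linarith

lemma sum_y_one {n : ℕ} {x y : ℕ → ℝ} (hx0 : ∀ i ∈ Finset.Icc 1 n, x i = 0)
    (hy : FeasY n x y) : ∑ i ∈ Finset.Icc 1 n, y i = 1 := by
  have h := hy.2.1
  rw [Finset.sum_add_distrib, Finset.sum_eq_zero hx0, zero_add] at h
  exact h

lemma sup_ge_scen1 {n : ℕ} (hn : 1 ≤ n) {a : ℕ → ℕ} {M : ℝ} {x : ℕ → ℝ}
    (hQ0 : 0 ≤ Q n a) (hM0 : 0 ≤ M) (hx : FeasX n x)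
    (hx0 : ∀ i ∈ Finset.Icc 1 n, x i = 0) :
    M + 2 * Q n a ≤ sSup (Wset n a M x) := by
  have h1mem : (1:ℕ) ∈ Finset.Icc 1 n := by simp only [Finset.mem_Icc]; omega
  set c1 : ℕ → ℝ := fun i => cl n M i + d n a i * (if i ≤ n then 1 else 0) with hc1def
  have hc1 : c1 ∈ UD n a M := by
    refine ⟨fun i => if i ≤ n then 1 else 0, ?_, fun i _ => rfl, ?_, ?_⟩
    · intro i _
      by_cases h : i ≤ n <;> simp [h]
    · intro i _
      rw [hc1def]
      unfold cl d
      by_cases h : i ≤ n <;> simp [h] <;> positivity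
    · rw [sum_split]
      have h1 : ∀ i ∈ Finset.Icc 1 n, (if i ≤ n then (1:ℝ) else 0) = 1 := by
        intro i hi
        simp only [Finset.mem_Icc] at hi
        rw [if_pos hi.2]
      have h2 : ∀ j ∈ Finset.Icc 1 n, (if n + j ≤ n then (1:ℝ) else 0) = 0 := by
        intro j hj
        simp only [Finset.mem_Icc] at hj
        rw [if_neg (by omega)]
      rw [Finset.sum_congr rfl h1, Finset.sum_congr rfl h2]
      simp [Nat.card_Icc]
  have hzval : ∀ z ∈ Zset n x c1, z = M + 2 * Q n a := by
    rintro z ⟨y, hy, rfl⟩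
    rw [sum_split]
    have hfirst : ∀ i ∈ Finset.Icc 1 n, c1 i * y i = (M + 2 * Q n a) * y i := by
      intro i hi
      simp only [Finset.mem_Icc] at hi
      simp only [hc1def, cl, d]
      rw [if_pos hi.2, if_pos hi.2, if_pos hi.2, mul_one]
    have hsecond : ∀ j ∈ Finset.Icc 1 n, c1 (n + j) * y (n + j) = 0 := by
      intro j hj
      simp only [Finset.mem_Icc] at hj
      have h2 : ¬ n + j ≤ n := by omega
      simp only [hc1def, cl, d]
      rw [if_neg h2, if_neg h2, if_neg h2]
      ring
    rw [Finset.sum_congr rfl hfirst, Finset.sum_congr rfl hsecond, ← Finset.mul_sum,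
      sum_y_one hx0 hy]
    simp
  have hne : (Zset n x c1).Nonempty :=
    ⟨_, ⟨yfun n x 1, yfun_feas hx hx0 h1mem, rfl⟩⟩
  have hw1 : M + 2 * Q n a ≤ sInf (Zset n x c1) :=
    le_csInf hne fun z hz => (hzval z hz).ge
  have hmemW : sInf (Zset n x c1) ∈ Wset n a M x := ⟨c1, hc1, rfl⟩
  exact le_trans hw1 (le_csSup (Wset_bddAbove hn hQ0 hx hx0) hmemW)

lemma sup_ge_scen2 {n : ℕ} (hn : 1 ≤ n) {a : ℕ → ℕ} {M : ℝ} {x : ℕ → ℝ}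
    (hQ0 : 0 ≤ Q n a) (hM0 : 0 ≤ M) (hx : FeasX n x)
    (hx0 : ∀ i ∈ Finset.Icc 1 n, x i = 0) :
    M + (∑ j ∈ Finset.Icc 1 n, 2 * (a j : ℝ))
        - 2 * (∑ j ∈ Finset.Icc 1 n, if x (n + j) = 1 then (a j : ℝ) else 0)
      ≤ sSup (Wset n a M x) := by
  have h1mem : (1:ℕ) ∈ Finset.Icc 1 n := by simp only [Finset.mem_Icc]; omega
  set c2 : ℕ → ℝ :=
    fun i => cl n M i + d n a i * (if i ≤ n then 0 else if x i = 1 then 0 else 1) with hc2def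
  have hc2 : c2 ∈ UD n a M := by
    refine ⟨fun i => if i ≤ n then 0 else if x i = 1 then 0 else 1, ?_, fun i _ => rfl, ?_, ?_⟩
    · intro i _
      by_cases h : i ≤ n
      · simp [h]
      · by_cases h2 : x i = 1 <;> simp [h, h2]
    · intro i _
      rw [hc2def]
      unfold cl d
      by_cases h : i ≤ n
      · simp [h]; positivity
      · by_cases h2 : x i = 1 <;> simp [h, h2] <;> positivity
    · rw [sum_split]
      have h1 : ∀ i ∈ Finset.Icc 1 n,
          (if i ≤ n then (0:ℝ) else if x i = 1 then 0 else 1) = 0 := by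
        intro i hi
        simp only [Finset.mem_Icc] at hi
        rw [if_pos hi.2]
      have h2 : ∀ j ∈ Finset.Icc 1 n,
          (if n + j ≤ n then (0:ℝ) else if x (n + j) = 1 then 0 else 1) ≤ 1 := by
        intro j hj
        simp only [Finset.mem_Icc] at hj
        rw [if_neg (by omega)]
        by_cases h : x (n + j) = 1 <;> simp [h]
      rw [Finset.sum_congr rfl h1]
      have hcard : ∑ _j ∈ Finset.Icc 1 n, (1:ℝ) = (n:ℝ) := by simp [Nat.card_Icc]
      simp only [Finset.sum_const_zero, zero_add]
      calc _ ≤ ∑ _j ∈ Finset.Icc 1 n, (1:ℝ) := Finset.sum_le_sum h2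
        _ = (n : ℝ) := hcard
  have hzval : ∀ z ∈ Zset n x c2,
      z = M + (∑ j ∈ Finset.Icc 1 n, 2 * (a j : ℝ))
        - 2 * (∑ j ∈ Finset.Icc 1 n, if x (n + j) = 1 then (a j : ℝ) else 0) := by
    rintro z ⟨y, hy, rfl⟩
    rw [sum_split]
    have hfirst : ∀ i ∈ Finset.Icc 1 n, c2 i * y i = M * y i := by
      intro i hi
      simp only [Finset.mem_Icc] at hi
      simp only [hc2def, cl, d]
      rw [if_pos hi.2, if_pos hi.2, if_pos hi.2]
      ring
    have hsecond : ∀ j ∈ Finset.Icc 1 n, c2 (n + j) * y (n + j)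
        = 2 * (a j : ℝ) - 2 * (if x (n + j) = 1 then (a j : ℝ) else 0) := by
      intro j hj
      have hj' := hj
      simp only [Finset.mem_Icc] at hj'
      have h2 : ¬ n + j ≤ n := by omega
      have h3 : n + j - n = j := by omega
      simp only [hc2def, cl, d]
      rw [if_neg h2, if_neg h2, if_neg h2, h3]
      by_cases h : x (n + j) = 1
      · rw [if_pos h, if_pos h]
        ring
      · have hz : x (n + j) = 0 := by
          rcases hx.1 (n + j) (memn_add hj) with h' | h'
          · exact h'
          · exact absurd h' h
        have hy1 : y (n + j) = 1 := by
          have := hy.2.2.1 (n + j) (by simp only [Finset.mem_Icc]; omega)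
          rw [hz] at this
          linarith
        rw [if_neg h, if_neg h, hy1]
        ring
    rw [Finset.sum_congr rfl hfirst, Finset.sum_congr rfl hsecond, ← Finset.mul_sum,
      sum_y_one hx0 hy, Finset.sum_sub_distrib]
    rw [← Finset.mul_sum (Finset.Icc 1 n) (fun j => if x (n + j) = 1 then (a j : ℝ) else 0) 2]
    ring
  have hne : (Zset n x c2).Nonempty :=
    ⟨_, ⟨yfun n x 1, yfun_feas hx hx0 h1mem, rfl⟩⟩
  have hw2 : M + (∑ j ∈ Finset.Icc 1 n, 2 * (a j : ℝ))
      - 2 * (∑ j ∈ Finset.Icc 1 n, if x (n + j) = 1 then (a j : ℝ) else 0)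
      ≤ sInf (Zset n x c2) :=
    le_csInf hne fun z hz => (hzval z hz).ge
  have hmemW : sInf (Zset n x c2) ∈ Wset n a M x := ⟨c2, hc2, rfl⟩
  exact le_trans hw2 (le_csSup (Wset_bddAbove hn hQ0 hx hx0) hmemW)

theorem stmt19 (n : ℕ) (hn : 1 ≤ n) (a : ℕ → ℕ) (M W : ℝ)
    (hM : 2 * Q n a < M) (hW : M + 4 * Q n a < W) :
    OptVal n a M W ≤ M + 3 * Q n a ↔
      ∃ I : Finset ℕ, I ⊆ Finset.Icc 1 n ∧ (∑ i ∈ I, (a i : ℝ)) = Q n a := by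
  have hQ0 : 0 ≤ Q n a := Q_nonneg n a
  have hM0 : (0:ℝ) < M := by linarith
  have hW0 : (0:ℝ) < W := by linarith
  have hA2 : ∑ i ∈ Finset.Icc 1 n, (a i : ℝ) = 2 * Q n a := two_Q n a
  have hA4 : ∑ j ∈ Finset.Icc 1 n, 2 * (a j : ℝ) = 4 * Q n a := by
    rw [← Finset.mul_sum (Finset.Icc 1 n) (fun j => (a j : ℝ)) 2, hA2]
    ring
  have hVlb : BddBelow (Vset n a M W) := ⟨0, fun v hv => Vset_nonneg hW0.le v hv⟩
  constructor
  · intro hopt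
    by_contra hno
    push_neg at hno
    have hQne : Q n a ≠ 0 := by
      intro h0
      exact hno ∅ (Finset.empty_subset _) (by simp [h0])
    set Anat : ℕ := ∑ i ∈ Finset.Icc 1 n, a i with hAnat
    have hcast : ((Anat : ℕ) : ℝ) = 2 * Q n a := by
      rw [hAnat]
      push_cast
      exact hA2
    have hQhalf : (1:ℝ)/2 ≤ Q n a := by
      have h1 : Anat ≠ 0 := by
        intro h
        apply hQne
        rw [h] at hcast
        simp only [Nat.cast_zero] at hcast
        linarith
      have h2 : (1:ℝ) ≤ (Anat : ℝ) := by
        exact_mod_cast Nat.one_le_iff_ne_zero.mpr h1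
      linarith
    have hvlb : ∀ v ∈ Vset n a M W, M + 3 * Q n a + 1/2 ≤ v := by
      rintro v ⟨x, hx, rfl⟩
      by_cases hcase : ∀ i ∈ Finset.Icc 1 n, x i = 0
      · set s : ℝ := ∑ j ∈ Finset.Icc 1 n, (if x (n + j) = 1 then (a j : ℝ) else 0) with hs
        have hfs : ∑ i ∈ Finset.Icc 1 (2 * n), C n a W i * x i = s :=
          first_stage_cost a W hcase hx.1
        set snat : ℕ := ∑ j ∈ Finset.Icc 1 n, (if x (n + j) = 1 then a j else 0) with hsnat
        have hscast : s = (snat : ℝ) := by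
          rw [hs, hsnat]
          push_cast [apply_ite (Nat.cast : ℕ → ℝ)]
          ring
        have hsne : 2 * snat ≠ Anat := by
          intro h
          apply hno ((Finset.Icc 1 n).filter (fun j => x (n + j) = 1))
            (Finset.filter_subset _ _)
          have h1 : ∑ j ∈ (Finset.Icc 1 n).filter (fun j => x (n + j) = 1), (a j : ℝ) = s := by
            rw [hs, Finset.sum_filter]
          rw [h1, hscast]
          have h2 : ((2 * snat : ℕ) : ℝ) = 2 * Q n a := by rw [h]; exact hcast
          push_cast at h2
          linarith
        have hb1 : M + 2 * Q n a ≤ sSup (Wset n a M x) :=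
          sup_ge_scen1 hn hQ0 hM0.le hx hcase
        have hb2 : M + 4 * Q n a - 2 * s ≤ sSup (Wset n a M x) := by
          have h := sup_ge_scen2 hn hQ0 hM0.le hx hcase
          rw [hA4] at h
          exact h
        rw [hfs]
        rcases Nat.lt_or_ge (2 * snat) Anat with h | h
        · have h1 : (2 * snat + 1 : ℕ) ≤ Anat := h
          have hle : 2 * (snat : ℝ) + 1 ≤ (Anat : ℝ) := by exact_mod_cast h1
          rw [hcast] at hle
          rw [hscast]
          rw [hscast] at hb2
          linarith
        · have h' : Anat < 2 * snat := lt_of_le_of_ne h fun heq => hsne heq.symm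
          have h1 : (Anat + 1 : ℕ) ≤ 2 * snat := h'
          have hle : (Anat : ℝ) + 1 ≤ 2 * (snat : ℝ) := by exact_mod_cast h1
          rw [hcast] at hle
          rw [hscast]
          linarith
      · push_neg at hcase
        obtain ⟨i1, hi1mem, hi1ne⟩ := hcase
        have hi1 : x i1 = 1 := by
          rcases hx.1 i1 (mem2n_of_le hi1mem) with h | h
          · exact absurd h hi1ne
          · exact h
        have hCnn : ∀ i ∈ Finset.Icc 1 (2 * n), 0 ≤ C n a W i * x i := by
          intro i hi
          rcases hx.1 i hi with h | h
          · simp [h]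
          · simpa [h] using C_nonneg (n := n) (a := a) hW0.le i
        have hterm : C n a W i1 * x i1 = W := by
          have hle : i1 ≤ n := by simp only [Finset.mem_Icc] at hi1mem; omega
          unfold C
          rw [if_pos hle, hi1, mul_one]
        have hWle : W ≤ ∑ i ∈ Finset.Icc 1 (2 * n), C n a W i * x i := by
          have h := Finset.single_le_sum hCnn (mem2n_of_le hi1mem)
          rw [hterm] at h
          exact h
        have hsup : 0 ≤ sSup (Wset n a M x) := Real.sSup_nonneg Wset_nonneg
        linarith
    have hx0feas : FeasX n (fun i => if i ≤ n then (0:ℝ) else 1) := by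
      refine ⟨?_, ?_, ?_⟩
      · intro i _
        by_cases h : i ≤ n
        · left; simp [h]
        · right; simp [h]
      · have : ∀ i ∈ Finset.Icc 1 n, (if i ≤ n then (0:ℝ) else 1) = 0 := by
          intro i hi
          simp only [Finset.mem_Icc] at hi
          rw [if_pos hi.2]
        rw [Finset.sum_congr rfl this]
        simp
      · intro i _
        by_cases h : i ≤ n <;> simp [h]
    have hVne : (Vset n a M W).Nonempty := ⟨_, ⟨_, hx0feas, rfl⟩⟩
    have hlb := le_csInf hVne hvlb
    rw [OptVal_eq] at hopt
    linarith
  · rintro ⟨I, hIsub, hIQ⟩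
    set x : ℕ → ℝ := fun i => if i ≤ n then 0 else if i - n ∈ I then 1 else 0 with hxdef
    have hx0 : ∀ i ∈ Finset.Icc 1 n, x i = 0 := by
      intro i hi
      simp only [Finset.mem_Icc] at hi
      simp [hxdef, hi.2]
    have hx : FeasX n x := by
      refine ⟨?_, ?_, ?_⟩
      · intro i _
        rw [hxdef]
        dsimp only
        split_ifs
        · left; rfl
        · right; rfl
        · left; rfl
      · rw [Finset.sum_congr rfl hx0]
        simp
      · intro i _
        rw [hxdef]
        dsimp only
        split_ifs <;> norm_num
    have hxval : ∀ j ∈ Finset.Icc 1 n, x (n + j) = if j ∈ I then 1 else 0 := by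
      intro j hj
      simp only [Finset.mem_Icc] at hj
      have h3 : n + j - n = j := by omega
      rw [hxdef]
      dsimp only
      rw [if_neg (by omega : ¬ n + j ≤ n), h3]
    have hfs : ∑ i ∈ Finset.Icc 1 (2 * n), C n a W i * x i = Q n a := by
      rw [first_stage_cost a W hx0 hx.1]
      have hcong : ∀ j ∈ Finset.Icc 1 n,
          (if x (n + j) = 1 then (a j : ℝ) else 0) = (if j ∈ I then (a j : ℝ) else 0) := by
        intro j hj
        rw [hxval j hj]
        by_cases h : j ∈ I <;> simp [h]
      rw [Finset.sum_congr rfl hcong, Finset.sum_ite_mem,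
        Finset.inter_eq_right.mpr hIsub]
      exact hIQ
    have hSb : ∑ j ∈ Finset.Icc 1 n, (if x (n + j) = 1 then 0 else 2 * (a j : ℝ))
        ≤ 2 * Q n a := by
      have heq : ∀ j ∈ Finset.Icc 1 n,
          (if x (n + j) = 1 then (0:ℝ) else 2 * (a j : ℝ))
            = 2 * (a j : ℝ) - (if j ∈ I then 2 * (a j : ℝ) else 0) := by
        intro j hj
        rw [hxval j hj]
        by_cases h : j ∈ I <;> simp [h]
      rw [Finset.sum_congr rfl heq, Finset.sum_sub_distrib, Finset.sum_ite_mem,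
        Finset.inter_eq_right.mpr hIsub, hA4]
      have hI2 : ∑ j ∈ I, 2 * (a j : ℝ) = 2 * Q n a := by
        rw [← Finset.mul_sum I (fun j => (a j : ℝ)) 2, hIQ]
      rw [hI2]
      linarith
    have hsup : sSup (Wset n a M x) ≤ M + 2 * Q n a := by
      apply Real.sSup_le
      · rintro w ⟨c, hc, rfl⟩
        exact inner_le_of_small hn hQ0 hx hx0 hSb hc
      · linarith
    have hmem : (∑ i ∈ Finset.Icc 1 (2 * n), C n a W i * x i) + sSup (Wset n a M x)
        ∈ Vset n a M W := ⟨x, hx, rfl⟩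
    rw [OptVal_eq]
    calc sInf (Vset n a M W)
        ≤ (∑ i ∈ Finset.Icc 1 (2 * n), C n a W i * x i) + sSup (Wset n a M x) :=
          csInf_le hVlb hmem
      _ ≤ M + 3 * Q n a := by rw [hfs]; linarith


end Partition2RSD
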